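/- Let K be a field, p a positive integer, M a finite-dimensional K[X]/(X^p)-module, N ⊆ M a submodule, and Q = M/N the quotient module. Then the short exact sequence 0 → N → M → Q → 0 splits (i.e. there is a K[X]/(X^p)-module homomorphism Q → M splitting the projection, equivalently N is a direct summand of M as a K[X]/(X^p)-module) if and only if for every s with 0 ≤ s < p, the rank of X^s on M equals the rank of X^s on N plus the rank of X^s on Q; equivalently, if and only if the Jordan type of M equals the sum of the Jordan types of N and Q. -/

import Mathlib

open Submodule LinearMap Module

section Aux

variable {K M : Type*} [Field K] [AddCommGroup M] [Module K M]

/-- Extend a subspace `B` to a complement of `A` inside `V`, given `A ⊓ B = ⊥`. -/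
lemma compl_extend (V A B : Submodule K M) (hA : A ≤ V) (hB : B ≤ V)
    (hAB : A ⊓ B = ⊥) : ∃ W, B ≤ W ∧ W ≤ V ∧ A ⊓ W = ⊥ ∧ A ⊔ W = V := by
  obtain ⟨C₀, hC₀⟩ := Submodule.exists_isCompl ((A ⊔ B).comap V.subtype)
  set C : Submodule K M := C₀.map V.subtype with hCdef
  have hinj : Function.Injective V.subtype := Subtype.coe_injective
  have hCV : C ≤ V := by
    rintro x ⟨y, _, rfl⟩; exact y.2
  have hABV : A ⊔ B ≤ V := sup_le hA hB
  have hmapcomap : ((A ⊔ B).comap V.subtype).map V.subtype = A ⊔ B := by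
    rw [Submodule.map_comap_subtype, inf_eq_right.mpr hABV]
  have hdisjC : (A ⊔ B) ⊓ C = ⊥ := by
    rw [← hmapcomap, hCdef, ← Submodule.map_inf _ hinj, hC₀.inf_eq_bot,
      Submodule.map_bot]
  have hsupC : (A ⊔ B) ⊔ C = V := by
    rw [← hmapcomap, hCdef, ← Submodule.map_sup, hC₀.sup_eq_top, Submodule.map_top,
      Submodule.range_subtype]
  refine ⟨B ⊔ C, le_sup_left, sup_le hB hCV, ?_, by rw [← sup_assoc, hsupC]⟩
  rw [eq_bot_iff]
  rintro x ⟨hxA, hxBC⟩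
  obtain ⟨b, hb, c, hc, rfl⟩ := Submodule.mem_sup.mp hxBC
  have hcAB : c ∈ (A ⊔ B) ⊓ C := by
    refine ⟨?_, hc⟩
    have : c = (b + c) - b := by abel
    rw [this]
    exact sub_mem (Submodule.mem_sup_left hxA) (Submodule.mem_sup_right hb)
  rw [hdisjC] at hcAB
  rw [(Submodule.mem_bot K).mp hcAB, add_zero] at hxA ⊢
  have : b ∈ A ⊓ B := ⟨hxA, hb⟩
  rw [hAB] at this
  simpa using this

/-- Key lemma: a pure `θ`-stable submodule of a bounded module has a `θ`-stable
complement. -/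
lemma pure_key (θ : Module.End K M) :
    ∀ (p : ℕ) (N P : Submodule K M), N ≤ P → P.map θ ≤ P → N.map θ ≤ N →
      P.map (θ ^ p) = ⊥ → (∀ s : ℕ, P.map (θ ^ s) ⊓ N ≤ N.map (θ ^ s)) →
      ∃ W : Submodule K M, W ≤ P ∧ W.map θ ≤ W ∧ N ⊓ W = ⊥ ∧ N ⊔ W = P := by
  intro p
  induction p with
  | zero =>
    intro N P hNP hP hNst hbound _
    rw [pow_zero, Module.End.one_eq_id, Submodule.map_id] at hbound
    subst hbound
    refine ⟨⊥, bot_le, by simp, by simp, ?_⟩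
    simp [le_bot_iff.mp hNP]
  | succ p ih =>
    intro N P hNP hP hNst hbound hpure
    have hmapsucc : ∀ (Q : Submodule K M) (s : ℕ),
        Q.map (θ ^ (s + 1)) = (Q.map θ).map (θ ^ s) := by
      intro Q s
      rw [pow_succ, Module.End.mul_eq_comp, Submodule.map_comp]
    obtain ⟨W', hW'P', hW'st, hdisj', hsup'⟩ :=
      ih (N.map θ) (P.map θ) (Submodule.map_mono hNP) (Submodule.map_mono hP)
        (Submodule.map_mono hNst)
        (by rw [← hmapsucc]; exact hbound)
        (by
          intro s
          rw [← hmapsucc P s, ← hmapsucc N s]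
          exact le_trans (inf_le_inf_left _ hNst) (hpure (s + 1)))
    set V : Submodule K M := P ⊓ (W'.comap θ) with hVdef
    have hW'V : W' ≤ V :=
      le_inf (hW'P'.trans hP) (Submodule.map_le_iff_le_comap.mp hW'st)
    have h1 : N ⊓ W' ≤ N.map θ := by
      have h := hpure 1
      rw [pow_one] at h
      intro x hx
      exact h ⟨hW'P' hx.2, hx.1⟩
    have hNW' : N ⊓ W' = ⊥ :=
      eq_bot_iff.mpr (hdisj' ▸ (le_inf h1 inf_le_right))
    have hdisjNV : (N ⊓ V) ⊓ W' = ⊥ :=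
      eq_bot_iff.mpr (le_trans (inf_le_inf_right _ inf_le_left) (le_of_eq hNW'))
    obtain ⟨W, hW'W, hWV, hdisjW, hsupW⟩ :=
      compl_extend V (N ⊓ V) W' inf_le_right hW'V hdisjNV
    have hVNP : V ⊔ N = P := by
      refine le_antisymm (sup_le inf_le_left hNP) ?_
      intro x hx
      have hθx : θ x ∈ N.map θ ⊔ W' := by
        rw [hsup']
        exact ⟨x, hx, rfl⟩
      obtain ⟨y, hy, w', hw', hyw⟩ := Submodule.mem_sup.mp hθx
      obtain ⟨n, hn, rfl⟩ := hy
      refine Submodule.mem_sup.mpr ⟨x - n, ⟨sub_mem hx (hNP hn), ?_⟩, n, hn, by abel⟩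
      show θ (x - n) ∈ W'
      rw [map_sub, ← hyw]
      simpa using hw'
    refine ⟨W, hWV.trans inf_le_left, ?_, ?_, ?_⟩
    · exact le_trans (le_trans (Submodule.map_mono (hWV.trans inf_le_right))
        (Submodule.map_comap_le θ W')) hW'W
    · rw [show N ⊓ W = (N ⊓ V) ⊓ W by rw [inf_assoc, inf_eq_right.mpr hWV], hdisjW]
    · refine le_antisymm (sup_le hNP (hWV.trans inf_le_left)) ?_
      have hVle : V ≤ N ⊔ W := by
        rw [← hsupW]
        exact sup_le (le_trans inf_le_left le_sup_left) le_sup_right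
      rw [← hVNP]
      exact sup_le hVle le_sup_left

lemma finrank_range_restrict_pow (θ : Module.End K M) (N : Submodule K M)
    (hN : ∀ x ∈ N, θ x ∈ N) (s : ℕ) :
    finrank K (LinearMap.range ((θ.restrict hN) ^ s)) = finrank K (N.map (θ ^ s)) := by
  rw [Module.End.pow_restrict s hN]
  have hmap : (LinearMap.range ((θ ^ s).restrict
      (Module.End.pow_apply_mem_of_forall_mem s hN))).map N.subtype = N.map (θ ^ s) := by
    ext x
    constructor
    · rintro ⟨⟨y, hy⟩, ⟨⟨z, hz⟩, hzy⟩, rfl⟩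
      exact ⟨z, hz, by simpa [LinearMap.restrict_apply] using congrArg Subtype.val hzy⟩
    · rintro ⟨z, hz, rfl⟩
      exact ⟨⟨(θ ^ s) z, Module.End.pow_apply_mem_of_forall_mem s hN z hz⟩,
        ⟨⟨z, hz⟩, by ext; simp [LinearMap.restrict_apply]⟩, rfl⟩
  rw [← hmap, Submodule.finrank_map_subtype_eq]

lemma finrank_range_mapQ_pow [FiniteDimensional K M] (θ : Module.End K M)
    (N : Submodule K M) (hN : N ≤ N.comap θ) (s : ℕ) :
    finrank K (LinearMap.range ((Submodule.mapQ N N θ hN) ^ s))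
      + finrank K ↥(LinearMap.range (θ ^ s) ⊓ N)
      = finrank K (LinearMap.range (θ ^ s)) := by
  rw [← Submodule.mapQ_pow]
  have h1 : LinearMap.range (Submodule.mapQ N N (θ ^ s)
      (N.le_comap_pow_of_le_comap hN s)) = (LinearMap.range (θ ^ s)).map N.mkQ := by
    rw [← LinearMap.range_comp_of_range_eq_top _ (Submodule.range_mkQ N),
      Submodule.mapQ_mkQ, LinearMap.range_comp]
  rw [h1]
  set R := LinearMap.range (θ ^ s) with hR
  have h2 := LinearMap.finrank_range_add_finrank_ker ((N.mkQ).domRestrict R)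
  have hr : LinearMap.range ((N.mkQ).domRestrict R) = R.map N.mkQ := by
    rw [LinearMap.domRestrict, LinearMap.range_comp, Submodule.range_subtype]
  have hk : finrank K ↥(LinearMap.ker ((N.mkQ).domRestrict R)) = finrank K ↥(R ⊓ N) := by
    rw [LinearMap.domRestrict, LinearMap.ker_comp, Submodule.ker_mkQ,
      ← Submodule.finrank_map_subtype_eq R, Submodule.map_comap_subtype]
  rw [hr, hk] at h2
  rw [h2]

lemma split_range_inf_le (θ : Module.End K M) (N : Submodule K M)
    (hN : N ≤ N.comap θ) (g : (M ⧸ N) →ₗ[K] M)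
    (hsec : N.mkQ ∘ₗ g = LinearMap.id)
    (hcomm : θ ∘ₗ g = g ∘ₗ Submodule.mapQ N N θ hN) (s : ℕ) :
    LinearMap.range (θ ^ s) ⊓ N ≤ N.map (θ ^ s) := by
  have hsec' : ∀ q : M ⧸ N, N.mkQ (g q) = q := fun q => LinearMap.congr_fun hsec q
  have hcomm' : ∀ q : M ⧸ N, (θ ^ s) (g q) = g ((Submodule.mapQ N N θ hN ^ s) q) := by
    intro q
    induction s generalizing q with
    | zero => simp
    | succ n ih =>
      rw [pow_succ, pow_succ, Module.End.mul_apply, Module.End.mul_apply,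
        show θ (g q) = g ((Submodule.mapQ N N θ hN) q) from LinearMap.congr_fun hcomm q,
        ih]
  rintro x ⟨⟨m, rfl⟩, hxN⟩
  set n : M := m - g (N.mkQ m) with hn
  have hnN : n ∈ N := by
    rw [← Submodule.Quotient.mk_eq_zero N]
    show N.mkQ n = 0
    rw [hn, map_sub, hsec', sub_self]
  set y : M ⧸ N := (Submodule.mapQ N N θ hN ^ s) (N.mkQ m) with hy
  have hsplit : (θ ^ s) m = (θ ^ s) n + g y := by
    rw [hy, ← hcomm', hn, map_sub]
    abel
  have hgyN : g y ∈ N := by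
    have h1 : (θ ^ s) n ∈ N := N.le_comap_pow_of_le_comap hN s hnN
    have : g y = (θ ^ s) m - (θ ^ s) n := by rw [hsplit]; abel
    rw [this]
    exact sub_mem hxN h1
  have hy0 : y = 0 := by
    rw [← hsec' y, Submodule.mkQ_apply, Submodule.Quotient.mk_eq_zero]
    exact hgyN
  rw [hsplit, hy0, map_zero, add_zero]
  exact ⟨n, hnN, rfl⟩

end Aux

/-- Let `M` be a finite-dimensional `K[X]/(X^p)`-module (a `K`-vector space with a
`p`-nilpotent endomorphism `θ`), let `N ⊆ M` be a submodule (a `θ`-stable subspace) and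
`Q = M/N` the quotient module.  Then the short exact sequence `0 → N → M → Q → 0`
splits — i.e. there is a `K[X]/(X^p)`-module homomorphism `Q → M` splitting the
projection — if and only if for every `0 ≤ s < p` the rank of `X^s` on `M` equals the
rank of `X^s` on `N` plus the rank of `X^s` on `Q` (equivalently, the Jordan type of
`M` is the sum of those of `N` and `Q`). -/
theorem split_iff_ranks_additive (K : Type*) [Field K] (p : ℕ) (hp : 0 < p)
    (M : Type*) [AddCommGroup M] [Module K M] [FiniteDimensional K M]
    (θ : Module.End K M) (hθ : θ ^ p = 0)
    (N : Submodule K M) (hN : N ≤ N.comap θ) :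
    (∃ g : (M ⧸ N) →ₗ[K] M,
        N.mkQ ∘ₗ g = LinearMap.id ∧
        θ ∘ₗ g = g ∘ₗ Submodule.mapQ N N θ hN)
      ↔ (∀ s : ℕ, s < p →
          Module.finrank K (LinearMap.range (θ ^ s))
            = Module.finrank K
                (LinearMap.range ((θ.restrict (p := N) (q := N) (fun x hx => hN hx)) ^ s))
              + Module.finrank K (LinearMap.range ((Submodule.mapQ N N θ hN) ^ s))) := by
  have hstab : ∀ x ∈ N, θ x ∈ N := fun x hx => hN hx
  have hNmap : N.map θ ≤ N := Submodule.map_le_iff_le_comap.mpr hN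
  constructor
  · rintro ⟨g, hsec, hcomm⟩ s hs
    have hinf : LinearMap.range (θ ^ s) ⊓ N = N.map (θ ^ s) := by
      refine le_antisymm (split_range_inf_le θ N hN g hsec hcomm s) ?_
      rintro x ⟨m, hm, rfl⟩
      exact ⟨⟨m, rfl⟩, N.le_comap_pow_of_le_comap hN s hm⟩
    have h2 := finrank_range_mapQ_pow θ N hN s
    rw [hinf] at h2
    rw [finrank_range_restrict_pow θ N hstab s]
    omega
  · intro h
    have hpure : ∀ s : ℕ, (⊤ : Submodule K M).map (θ ^ s) ⊓ N ≤ N.map (θ ^ s) := by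
      intro s
      rw [Submodule.map_top]
      rcases lt_or_ge s p with hsp | hsp
      · have h2 := finrank_range_mapQ_pow θ N hN s
        have h1 := finrank_range_restrict_pow θ N hstab s
        have hle : N.map (θ ^ s) ≤ LinearMap.range (θ ^ s) ⊓ N := by
          rintro x ⟨m, hm, rfl⟩
          exact ⟨⟨m, rfl⟩, N.le_comap_pow_of_le_comap hN s hm⟩
        have heq : Module.finrank K ↥(N.map (θ ^ s))
            = Module.finrank K ↥(LinearMap.range (θ ^ s) ⊓ N) := by
          have h3 := h s hsp
          rw [h1] at h3
          omega
        exact le_of_eq (Submodule.eq_of_le_of_finrank_eq hle heq).symm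
      · have hz : θ ^ s = 0 := by
          have hds : θ ^ s = θ ^ (s - p) * θ ^ p := by
            rw [← pow_add]
            congr 1
            omega
          rw [hds, hθ, mul_zero]
        rw [hz]
        intro x hx
        have hx0 : x = 0 := by simpa using hx.1
        simp [hx0]
    obtain ⟨W, hWtop, hWst, hdisj, hsup⟩ :=
      pure_key θ p N ⊤ le_top le_top hNmap
        (by rw [Submodule.map_top, hθ, LinearMap.range_zero]) hpure
    set f : ↥W →ₗ[K] M ⧸ N := (N.mkQ).domRestrict W with hf
    have hinj : Function.Injective f := by
      rw [← LinearMap.ker_eq_bot, hf, LinearMap.domRestrict, LinearMap.ker_comp,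
        Submodule.ker_mkQ, Submodule.eq_bot_iff]
      rintro ⟨x, hxW⟩ hx
      have hmem : x ∈ N ⊓ W := ⟨hx, hxW⟩
      rw [hdisj] at hmem
      exact Subtype.ext (by simpa using hmem)
    have hsurj : Function.Surjective f := by
      rw [← LinearMap.range_eq_top, hf, LinearMap.domRestrict, LinearMap.range_comp,
        Submodule.range_subtype, Submodule.map_mkQ_eq_top]
      exact hsup
    set e := LinearEquiv.ofBijective f ⟨hinj, hsurj⟩ with he
    refine ⟨W.subtype ∘ₗ e.symm.toLinearMap, ?_, ?_⟩
    · apply LinearMap.ext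
      intro q
      show N.mkQ ((e.symm q : W) : M) = q
      have h1 : N.mkQ ((e.symm q : W) : M) = f (e.symm q) := rfl
      rw [h1]
      exact e.apply_symm_apply q
    · apply LinearMap.ext
      intro q
      set w : ↥W := e.symm q with hw
      have hθw : θ (w : M) ∈ W := hWst ⟨(w : M), w.2, rfl⟩
      show θ (w : M) = ((e.symm ((Submodule.mapQ N N θ hN) q) : W) : M)
      have hkey : e ⟨θ (w : M), hθw⟩ = (Submodule.mapQ N N θ hN) q := by
        show f ⟨θ (w : M), hθw⟩ = _
        have h1 : f ⟨θ (w : M), hθw⟩ = N.mkQ (θ (w : M)) := rfl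
        have h2 : (Submodule.mapQ N N θ hN) (N.mkQ (w : M)) = N.mkQ (θ (w : M)) := by
          rw [Submodule.mkQ_apply, Submodule.mkQ_apply, Submodule.mapQ_apply]
        have h3 : N.mkQ (w : M) = q := by
          rw [show N.mkQ (w : M) = f w from rfl, hw]
          exact e.apply_symm_apply q
        rw [h1, ← h2, h3]
      rw [← hkey, e.symm_apply_apply]
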